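/- Let n ≥ 3 and G = C_{n,n}. If T = A ∪ {a+1 : a ∈ A} for some subset A of the odd vertices X with |A| = n - 2, then the induced subgraph of G on [2n] \ T has exactly two connected components, and for every u ∈ T the induced subgraph on ([2n] \ T) ∪ {u} is a path graph on five vertices with u as its middle vertex. -/

import Mathlib

open SimpleGraph

/-- The crown graph `C_{n,n}`: vertices `Fin (2*n)`, where index `2i-2` plays the role of the
odd-labelled vertex `2i-1` of the paper and index `2i-1` the even-labelled vertex `2i`.
An even index `u` and an odd index `v` are adjacent iff `v ≠ u + 1`. -/
def crownGraph (n : ℕ) : SimpleGraph (Fin (2 * n)) where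
  Adj u v := (u.val % 2 = 0 ∧ v.val % 2 = 1 ∧ v.val ≠ u.val + 1) ∨
             (v.val % 2 = 0 ∧ u.val % 2 = 1 ∧ u.val ≠ v.val + 1)
  symm := ⟨by intro u v h; tauto⟩
  loopless := ⟨by intro u h; rcases h with ⟨h1, h2, _⟩ | ⟨h1, h2, _⟩ <;> omega⟩

/-- The part `X` (odd-labelled vertices of the paper): even indices. -/
def crownX (n : ℕ) : Finset (Fin (2 * n)) := Finset.univ.filter (fun u => u.val % 2 = 0)

/-- The part `Y` (even-labelled vertices of the paper): odd indices. -/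
def crownY (n : ℕ) : Finset (Fin (2 * n)) := Finset.univ.filter (fun u => u.val % 2 = 1)


/-- Number of connected components of the induced subgraph on `s`. -/
noncomputable def numComponents {V : Type*} (G : SimpleGraph V) (s : Set V) : ℕ :=
  Nat.card (G.induce s).ConnectedComponent


/-- The successor map on `Fin (2*n)` (no wrap-around occurs on even indices). -/
def finSucc {n : ℕ} (a : Fin (2 * n)) : Fin (2 * n) :=
  ⟨(a.val + 1) % (2 * n), Nat.mod_lt _ a.pos⟩

lemma crown_adj {n : ℕ} {v w : Fin (2*n)} : (crownGraph n).Adj v w ↔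
    ((v.val % 2 = 0 ∧ w.val % 2 = 1 ∧ w.val ≠ v.val + 1) ∨
     (w.val % 2 = 0 ∧ v.val % 2 = 1 ∧ v.val ≠ w.val + 1)) := Iff.rfl

lemma reach_invar {V : Type*} {G : SimpleGraph V} {f : V → Bool}
    (h : ∀ a b, G.Adj a b → f a = f b) {v w : V} (hr : G.Reachable v w) : f v = f w := by
  obtain ⟨p⟩ := hr
  induction p with
  | nil => rfl
  | cons hadj _ ih => exact (h _ _ hadj).trans ih

lemma finSucc_val {n : ℕ} {a : Fin (2*n)} (h : a.val % 2 = 0) :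
    (finSucc a).val = a.val + 1 := by
  have ha := a.isLt
  simp only [finSucc]
  rw [Nat.mod_eq_of_lt (by omega)]

lemma fin5_forall (P : Fin 5 → Prop) (h0 : P 0) (h1 : P 1) (h2 : P 2) (h3 : P 3)
    (h4 : P 4) : ∀ i, P i := by
  intro i
  fin_cases i <;> assumption

lemma path_equiv {V : Type*} (G : SimpleGraph V) (v : Fin 5 → V) (hinj : Function.Injective v)
    (hadj : ∀ i j : Fin 5, G.Adj (v i) (v j) ↔ (i.val + 1 = j.val ∨ j.val + 1 = i.val)) :
    ∃ e : Fin 5 ≃ (Set.range v),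
      (∀ i j : Fin 5, (G.induce (Set.range v)).Adj (e i) (e j) ↔
        (i.val + 1 = j.val ∨ j.val + 1 = i.val)) ∧
      ((e 2 : Set.range v) : V) = v 2 := by
  refine ⟨Equiv.ofInjective v hinj, ?_, rfl⟩
  intro i j
  rw [comap_adj]
  simp only [Function.Embedding.coe_subtype, Equiv.ofInjective_apply]
  exact hadj i j

lemma crownX_card (n : ℕ) : (crownX n).card = n := by
  have h : (crownX n).card = (Finset.range n).card := by
    rw [crownX]
    refine Finset.card_bij' (fun a _ => a.val / 2)
        (fun k hk => (⟨2*k, ?_⟩ : Fin (2*n))) ?_ ?_ ?_ ?_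
    · simp only [Finset.mem_range] at hk
      omega
    · intro a ha
      simp only [Finset.mem_filter, Finset.mem_univ, true_and] at ha
      have := a.isLt
      simp only [Finset.mem_range]
      omega
    · intro k hk
      simp only [Finset.mem_filter, Finset.mem_univ, true_and]
      omega
    · intro a ha
      simp only [Finset.mem_filter, Finset.mem_univ, true_and] at ha
      apply Fin.ext
      simp only
      omega
    · intro k hk
      simp only
      omega
  simpa using h

set_option maxHeartbeats 1000000 in
theorem crown_components_and_path (n : ℕ) (hn : 3 ≤ n) (T A : Finset (Fin (2 * n)))
    (hA : A ⊆ crownX n) (hAcard : A.card = n - 2) (hT : T = A ∪ A.image finSucc) :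
    numComponents (crownGraph n) ((↑T : Set (Fin (2 * n)))ᶜ) = 2 ∧
    ∀ u ∈ T, ∃ e : Fin 5 ≃ ((↑T : Set (Fin (2 * n)))ᶜ ∪ {u} : Set (Fin (2 * n))),
      (∀ i j : Fin 5,
        ((crownGraph n).induce ((↑T : Set (Fin (2 * n)))ᶜ ∪ {u})).Adj (e i) (e j) ↔
          (i.val + 1 = j.val ∨ j.val + 1 = i.val)) ∧
      ((e 2 : ((↑T : Set (Fin (2 * n)))ᶜ ∪ {u} : Set (Fin (2 * n)))) : Fin (2 * n)) = u := by
  have hAeven : ∀ a ∈ A, a.val % 2 = 0 := by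
    intro a ha
    have := hA ha
    simpa [crownX] using this
  have hBcard : ((crownX n) \ A).card = 2 := by
    rw [Finset.card_sdiff_of_subset hA, crownX_card, hAcard]; omega
  obtain ⟨x, y, hxy, hB⟩ := Finset.card_eq_two.mp hBcard
  have hxB : x ∈ crownX n \ A := by rw [hB]; simp
  have hyB : y ∈ crownX n \ A := by rw [hB]; simp
  rw [Finset.mem_sdiff] at hxB hyB
  have hx2 : x.val % 2 = 0 := by have := hxB.1; simpa [crownX] using this
  have hy2 : y.val % 2 = 0 := by have := hyB.1; simpa [crownX] using this
  have hxA : x ∉ A := hxB.2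
  have hyA : y ∉ A := hyB.2
  have hxyv : x.val ≠ y.val := fun h => hxy (Fin.ext h)
  have hx' : (finSucc x).val = x.val + 1 := finSucc_val hx2
  have hy' : (finSucc y).val = y.val + 1 := finSucc_val hy2
  -- elements not in T are exactly x, y, x', y'
  have hmemB : ∀ v : Fin (2*n), v.val % 2 = 0 → v ∉ A → v = x ∨ v = y := by
    intro v hv hvA
    have : v ∈ crownX n \ A := by
      rw [Finset.mem_sdiff]
      exact ⟨by simp [crownX, hv], hvA⟩
    rw [hB] at this
    simpa using this
  have hnotT : ∀ v : Fin (2*n), (v = x ∨ v = y ∨ v = finSucc x ∨ v = finSucc y) →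
      v ∉ A ∪ A.image finSucc := by
    intro v hv hvT
    rw [Finset.mem_union] at hvT
    rcases hvT with h | h
    · have hve := hAeven v h
      rcases hv with rfl | rfl | rfl | rfl
      · exact hxA h
      · exact hyA h
      · omega
      · omega
    · rw [Finset.mem_image] at h
      obtain ⟨a, haA, hav⟩ := h
      have hae := hAeven a haA
      have hav' : (finSucc a).val = a.val + 1 := finSucc_val hae
      rcases hv with rfl | rfl | rfl | rfl
      · rw [← hav] at hx2; omega
      · rw [← hav] at hy2; omega
      · have : a = x := by
          apply Fin.ext
          have := congrArg Fin.val hav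
          omega
        exact hxA (this ▸ haA)
      · have : a = y := by
          apply Fin.ext
          have := congrArg Fin.val hav
          omega
        exact hyA (this ▸ haA)
  have hs : (↑T : Set (Fin (2 * n)))ᶜ = {x, y, finSucc x, finSucc y} := by
    ext v
    simp only [Set.mem_compl_iff, Set.mem_insert_iff, Set.mem_singleton_iff,
      Finset.mem_coe]
    constructor
    · intro hv
      rw [hT, Finset.mem_union] at hv
      push_neg at hv
      by_cases hpar : v.val % 2 = 0
      · rcases hmemB v hpar hv.1 with rfl | rfl
        · tauto
        · tauto
      · have hv1 : 1 ≤ v.val := by omega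
        obtain ⟨w, hwval⟩ : ∃ w : Fin (2*n), w.val = v.val - 1 :=
          ⟨⟨v.val - 1, by have := v.isLt; omega⟩, rfl⟩
        have hwe : w.val % 2 = 0 := by omega
        have hwv : finSucc w = v := by
          apply Fin.ext
          rw [finSucc_val hwe]
          omega
        have hwA : w ∉ A := by
          intro hwA
          exact hv.2 (Finset.mem_image.mpr ⟨w, hwA, hwv⟩)
        rcases hmemB w hwe hwA with rfl | rfl
        · right; right; left; exact hwv.symm
        · right; right; right; exact hwv.symm
    · intro hv hvT
      exact hnotT v (by tauto) (by rwa [← hT])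
  -- distinctness of the four/five values
  have hx'2 : (finSucc x).val % 2 = 1 := by omega
  have hy'2 : (finSucc y).val % 2 = 1 := by omega
  constructor
  · -- number of components
    rw [numComponents, hs]
    set S : Set (Fin (2*n)) := {x, y, finSucc x, finSucc y} with hS
    have hxS : x ∈ S := by simp [hS]
    have hyS : y ∈ S := by simp [hS]
    have hx'S : finSucc x ∈ S := by simp [hS]
    have hy'S : finSucc y ∈ S := by simp [hS]
    set G' := (crownGraph n).induce S with hG'
    set vx : S := ⟨x, hxS⟩
    set vy : S := ⟨y, hyS⟩
    set vx' : S := ⟨finSucc x, hx'S⟩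
    set vy' : S := ⟨finSucc y, hy'S⟩
    have hadj_xy' : G'.Adj vx vy' := by
      simp only [hG', comap_adj, Function.Embedding.coe_subtype, crown_adj]
      left; exact ⟨hx2, hy'2, by change (finSucc y).val ≠ x.val + 1; omega⟩
    have hadj_yx' : G'.Adj vy vx' := by
      simp only [hG', comap_adj, Function.Embedding.coe_subtype, crown_adj]
      left; exact ⟨hy2, hx'2, by change (finSucc x).val ≠ y.val + 1; omega⟩
    have hall : ∀ c : G'.ConnectedComponent,
        c = G'.connectedComponentMk vx ∨ c = G'.connectedComponentMk vx' := by
      apply SimpleGraph.ConnectedComponent.ind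
      rintro ⟨v, hv⟩
      simp only [hS, Set.mem_insert_iff, Set.mem_singleton_iff] at hv
      rcases hv with rfl | rfl | rfl | rfl
      · left; rfl
      · right
        exact SimpleGraph.ConnectedComponent.sound hadj_yx'.reachable
      · right; rfl
      · left
        exact SimpleGraph.ConnectedComponent.sound hadj_xy'.symm.reachable
    have hne : G'.connectedComponentMk vx ≠ G'.connectedComponentMk vx' := by
      intro h
      have hrec : G'.Reachable vx vx' := SimpleGraph.ConnectedComponent.exact h
      have hinv : ∀ a b : S, G'.Adj a b →
          (decide ((a : Fin (2*n)).val = x.val ∨ (a : Fin (2*n)).val = y.val + 1)) =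
          (decide ((b : Fin (2*n)).val = x.val ∨ (b : Fin (2*n)).val = y.val + 1)) := by
        rintro ⟨a, ha⟩ ⟨b, hb⟩ hab
        simp only [hG', comap_adj, Function.Embedding.coe_subtype, crown_adj] at hab
        simp only [hS, Set.mem_insert_iff, Set.mem_singleton_iff] at ha hb
        simp only [decide_eq_decide]
        rcases ha with rfl | rfl | rfl | rfl <;> rcases hb with rfl | rfl | rfl | rfl <;> omega
      have := reach_invar hinv hrec
      simp only [decide_eq_decide] at this
      have h1 : (vx : Fin (2*n)).val = x.val := rfl
      have h2 : (vx' : Fin (2*n)).val = (finSucc x).val := rfl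
      rw [h1, h2] at this
      rcases this.mp (by tauto) with h | h <;> omega
    rw [Nat.card_eq_two_iff]
    refine ⟨G'.connectedComponentMk vx, G'.connectedComponentMk vx', hne, ?_⟩
    rw [Set.eq_univ_iff_forall]
    intro c
    rcases hall c with h | h <;> simp [h]
  · -- path statement
    intro u hu
    rw [hs, Set.union_singleton]
    rw [hT, Finset.mem_union] at hu
    rcases hu with hu | hu
    · -- u ∈ A : u is even
      have hu2 : u.val % 2 = 0 := hAeven u hu
      have hux : u.val ≠ x.val := fun h => hxA ((Fin.ext h : u = x) ▸ hu)
      have huy : u.val ≠ y.val := fun h => hyA ((Fin.ext h : u = y) ▸ hu)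
      set v : Fin 5 → Fin (2*n) := ![x, finSucc y, u, finSucc x, y] with hv
      have hvne : ∀ i : Fin 5, ∀ j : Fin 5, i ≠ j → (v i).val ≠ (v j).val := by
        refine fin5_forall _ ?_ ?_ ?_ ?_ ?_ <;> refine fin5_forall _ ?_ ?_ ?_ ?_ ?_ <;>
          intro hne <;>
          first
            | exact absurd rfl hne
            | (simp only [hv, Matrix.cons_val_zero, Matrix.cons_val_one, Matrix.head_cons,
                Matrix.cons_val_two, Matrix.tail_cons, Matrix.cons_val_three,
                Matrix.cons_val_four]
               omega)
      have hinj : Function.Injective v := by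
        intro i j hij
        by_contra hne
        exact hvne i j hne (congrArg Fin.val hij)
      have hadj : ∀ i : Fin 5, ∀ j : Fin 5, ((crownGraph n).Adj (v i) (v j) ↔
          (i.val + 1 = j.val ∨ j.val + 1 = i.val)) := by
        refine fin5_forall _ ?_ ?_ ?_ ?_ ?_ <;> refine fin5_forall _ ?_ ?_ ?_ ?_ ?_ <;>
          (rw [crown_adj]
           simp only [hv, Matrix.cons_val_zero, Matrix.cons_val_one, Matrix.head_cons,
             Matrix.cons_val_two, Matrix.tail_cons, Matrix.cons_val_three,
             Matrix.cons_val_four,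
             show ((0:Fin 5)).val = 0 from rfl, show ((1:Fin 5)).val = 1 from rfl,
             show ((2:Fin 5)).val = 2 from rfl, show ((3:Fin 5)).val = 3 from rfl,
             show ((4:Fin 5)).val = 4 from rfl]
           norm_num
           try omega)
      have hrange : (insert u ({x, y, finSucc x, finSucc y} : Set (Fin (2*n)))) = Set.range v := by
        ext w
        constructor
        · intro hw
          simp only [Set.mem_insert_iff, Set.mem_singleton_iff] at hw
          rcases hw with rfl | rfl | rfl | rfl | rfl
          exacts [⟨2, rfl⟩, ⟨0, rfl⟩, ⟨4, rfl⟩, ⟨3, rfl⟩, ⟨1, rfl⟩]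
        · rintro ⟨i, rfl⟩
          revert i
          refine fin5_forall _ ?_ ?_ ?_ ?_ ?_ <;> simp [hv]
      rw [hrange]
      obtain ⟨e, h1, h2⟩ := path_equiv (crownGraph n) v hinj (fun i j => hadj i j)
      exact ⟨e, h1, h2⟩
    · -- u is the successor of an element of A : u is odd
      rw [Finset.mem_image] at hu
      obtain ⟨a, haA, rfl⟩ := hu
      have ha2 : a.val % 2 = 0 := hAeven a haA
      have ha' : (finSucc a).val = a.val + 1 := finSucc_val ha2
      have hax : a.val ≠ x.val := fun h => hxA ((Fin.ext h : a = x) ▸ haA)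
      have hay : a.val ≠ y.val := fun h => hyA ((Fin.ext h : a = y) ▸ haA)
      set v : Fin 5 → Fin (2*n) := ![finSucc y, x, finSucc a, y, finSucc x] with hv
      have hvne : ∀ i : Fin 5, ∀ j : Fin 5, i ≠ j → (v i).val ≠ (v j).val := by
        refine fin5_forall _ ?_ ?_ ?_ ?_ ?_ <;> refine fin5_forall _ ?_ ?_ ?_ ?_ ?_ <;>
          intro hne <;>
          first
            | exact absurd rfl hne
            | (simp only [hv, Matrix.cons_val_zero, Matrix.cons_val_one, Matrix.head_cons,
                Matrix.cons_val_two, Matrix.tail_cons, Matrix.cons_val_three,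
                Matrix.cons_val_four]
               omega)
      have hinj : Function.Injective v := by
        intro i j hij
        by_contra hne
        exact hvne i j hne (congrArg Fin.val hij)
      have hadj : ∀ i : Fin 5, ∀ j : Fin 5, ((crownGraph n).Adj (v i) (v j) ↔
          (i.val + 1 = j.val ∨ j.val + 1 = i.val)) := by
        refine fin5_forall _ ?_ ?_ ?_ ?_ ?_ <;> refine fin5_forall _ ?_ ?_ ?_ ?_ ?_ <;>
          (rw [crown_adj]
           simp only [hv, Matrix.cons_val_zero, Matrix.cons_val_one, Matrix.head_cons,
             Matrix.cons_val_two, Matrix.tail_cons, Matrix.cons_val_three,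
             Matrix.cons_val_four,
             show ((0:Fin 5)).val = 0 from rfl, show ((1:Fin 5)).val = 1 from rfl,
             show ((2:Fin 5)).val = 2 from rfl, show ((3:Fin 5)).val = 3 from rfl,
             show ((4:Fin 5)).val = 4 from rfl]
           norm_num
           try omega)
      have hrange : (insert (finSucc a) ({x, y, finSucc x, finSucc y} : Set (Fin (2*n)))) = Set.range v := by
        ext w
        constructor
        · intro hw
          simp only [Set.mem_insert_iff, Set.mem_singleton_iff] at hw
          rcases hw with rfl | rfl | rfl | rfl | rfl
          exacts [⟨2, rfl⟩, ⟨1, rfl⟩, ⟨3, rfl⟩, ⟨4, rfl⟩, ⟨0, rfl⟩]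
        · rintro ⟨i, rfl⟩
          revert i
          refine fin5_forall _ ?_ ?_ ?_ ?_ ?_ <;> simp [hv]
      rw [hrange]
      obtain ⟨e, h1, h2⟩ := path_equiv (crownGraph n) v hinj (fun i j => hadj i j)
      exact ⟨e, h1, h2⟩
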